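/- Let a, b, c be pairwise coprime positive integers and let T(x) denote the number of triples (x_1, x_2, x_3) ∈ ℕ³ with x_1·a + x_2·b + x_3·c = x. Then there exist real constants K and L (depending only on a, b, c) such that for all natural numbers x, |T(x) − (abc/2)·⌊x/(abc)⌋²| ≤ K·x + L. -/

import Mathlib

open Finset

lemma resCount (b M n u : ℕ) (hb : 0 < b) (hu : u < b) (hn : M < n) :
    M / b ≤ ((range n).filter (fun x => x ≤ M ∧ x % b = u)).card ∧
    ((range n).filter (fun x => x ≤ M ∧ x % b = u)).card ≤ M / b + 1 := by
  by_cases hum : u ≤ M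
  · have hset : (range n).filter (fun x => x ≤ M ∧ x % b = u)
        = (range ((M - u)/b + 1)).image (fun j => u + b * j) := by
      ext x
      simp only [mem_filter, mem_range, mem_image]
      constructor
      · rintro ⟨hxn, hxM, hxu⟩
        have hx : x = b * (x / b) + u := by
          have := Nat.div_add_mod x b; omega
        refine ⟨x / b, ?_, by omega⟩
        have h1 : x / b ≤ (M - u) / b := by
          rw [Nat.le_div_iff_mul_le hb]
          have hcomm : x / b * b = b * (x / b) := Nat.mul_comm _ _
          omega
        omega
      · rintro ⟨j, hj, rfl⟩
        have h2 : b * j ≤ b * ((M - u)/b) := Nat.mul_le_mul_left b (by omega)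
        have h3 : b * ((M - u)/b) ≤ M - u := Nat.mul_div_le _ _
        have h4 : (u + b * j) % b = u % b := Nat.add_mul_mod_self_left u b j
        have h5 : u % b = u := Nat.mod_eq_of_lt hu
        refine ⟨by omega, by omega, by omega⟩
    have hinj : Function.Injective (fun j => u + b * j) := by
      intro j1 j2 h
      simp only at h
      exact Nat.eq_of_mul_eq_mul_left hb (by omega)
    rw [hset, Finset.card_image_of_injective _ hinj, card_range]
    constructor
    · have h1 : M / b ≤ ((M - u) + b) / b := Nat.div_le_div_right (by omega)
      rw [Nat.add_div_right _ hb] at h1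
      omega
    · have := Nat.div_le_div_right (c := b) (Nat.sub_le M u)
      omega
  · have hset : (range n).filter (fun x => x ≤ M ∧ x % b = u) = ∅ := by
      ext x
      simp only [mem_filter, mem_range, notMem_empty, iff_false]
      rintro ⟨hxn, hxM, hxu⟩
      have := Nat.mod_le x b
      omega
    rw [hset]
    simp only [card_empty]
    have : M / b = 0 := Nat.div_eq_of_lt (by omega)
    omega

lemma pairBound (a b : ℕ) (ha : 0 < a) (hb : 0 < b) (hab : Nat.Coprime a b) (m : ℕ) :
    m / (a*b) ≤ (((range (m+1)) ×ˢ (range (m+1))).filter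
        (fun p : ℕ × ℕ => p.1 * a + p.2 * b = m)).card ∧
    (((range (m+1)) ×ˢ (range (m+1))).filter
        (fun p : ℕ × ℕ => p.1 * a + p.2 * b = m)).card ≤ m / (a*b) + 1 := by
  haveI : NeZero b := ⟨hb.ne'⟩
  set u : ℕ := ((m : ZMod b) * (a : ZMod b)⁻¹).val with hu_def
  have hu : u < b := ZMod.val_lt _
  have huZ : (u : ZMod b) = (m : ZMod b) * (a : ZMod b)⁻¹ := ZMod.natCast_zmod_val _
  have hainv : (a : ZMod b) * (a : ZMod b)⁻¹ = 1 := ZMod.coe_mul_inv_eq_one a hab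
  have hua : (u : ZMod b) * a = (m : ZMod b) := by
    rw [huZ, mul_assoc, mul_comm ((a:ZMod b)⁻¹) (a : ZMod b), hainv, mul_one]
  -- key equivalence
  have key : ∀ x : ℕ, (x % b = u) ↔ ((x : ZMod b) * a = (m : ZMod b)) := by
    intro x
    constructor
    · intro h
      have : (x : ZMod b) = (u : ZMod b) := by
        rw [ZMod.natCast_eq_natCast_iff']
        rw [h, Nat.mod_eq_of_lt hu]
      rw [this, hua]
    · intro h
      have hxu : (x : ZMod b) = (u : ZMod b) := by
        have := congrArg (· * (a : ZMod b)⁻¹) (h.trans hua.symm)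
        simpa [mul_assoc, hainv] using this
      rw [ZMod.natCast_eq_natCast_iff'] at hxu
      rw [hxu, Nat.mod_eq_of_lt hu]
  have hcard : (((range (m+1)) ×ˢ (range (m+1))).filter
        (fun p : ℕ × ℕ => p.1 * a + p.2 * b = m)).card
      = ((range (m+1)).filter (fun x => x ≤ m / a ∧ x % b = u)).card := by
    apply Finset.card_bij (fun p _ => p.1)
    · rintro p hp
      simp only [mem_filter, mem_product, mem_range] at hp ⊢
      obtain ⟨⟨h1, h2⟩, h3⟩ := hp
      refine ⟨h1, ?_, ?_⟩
      · rw [Nat.le_div_iff_mul_le ha]; omega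
      · rw [key]
        have : ((p.1 * a + p.2 * b : ℕ) : ZMod b) = (m : ZMod b) := by rw [h3]
        push_cast at this
        rw [← this]
        simp [ZMod.natCast_self]
    · rintro p hp p' hp' h
      simp only [mem_filter, mem_product, mem_range] at hp hp'
      have haa : p.1 * a = p'.1 * a := by rw [h]
      have : p.2 * b = p'.2 * b := by omega
      have h2 : p.2 = p'.2 := Nat.eq_of_mul_eq_mul_right hb this
      exact Prod.ext h h2
    · rintro x hx
      simp only [mem_filter, mem_range] at hx
      obtain ⟨h1, h2, h3⟩ := hx
      have hxa : x * a ≤ m := by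
        rw [Nat.le_div_iff_mul_le ha] at h2; exact h2
      have hdvd : b ∣ (m - x * a) := by
        rw [← ZMod.natCast_eq_zero_iff]
        rw [Nat.cast_sub hxa]
        rw [key] at h3
        push_cast
        rw [h3]; ring
      refine ⟨(x, (m - x * a) / b), ?_, rfl⟩
      simp only [mem_filter, mem_product, mem_range]
      have h4 : (m - x * a) / b * b = m - x * a := Nat.div_mul_cancel hdvd
      have h5 : (m - x*a)/b ≤ (m - x*a)/b * b := Nat.le_mul_of_pos_right _ hb
      refine ⟨⟨h1, by omega⟩, by omega⟩
  rw [hcard]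
  have hM : m / a / b = m / (a * b) := Nat.div_div_eq_div_mul m a b
  have := resCount b (m / a) (m+1) u hb hu (by have := Nat.div_le_self m a; omega)
  omega

lemma tripleSet (a b c x : ℕ) (ha : 0 < a) (hb : 0 < b) (hc : 0 < c) :
    {p : ℕ × ℕ × ℕ | p.1 * a + p.2.1 * b + p.2.2 * c = x}.ncard
    = (((range (x+1)) ×ˢ (range (x+1)) ×ˢ (range (x+1))).filter
        (fun p : ℕ × ℕ × ℕ => p.1 * a + p.2.1 * b + p.2.2 * c = x)).card := by
  rw [← Set.ncard_coe_finset]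
  congr 1
  ext p
  simp only [Set.mem_setOf_eq, coe_filter, mem_product, mem_range]
  constructor
  · intro h
    have h1 : p.1 ≤ p.1 * a := Nat.le_mul_of_pos_right _ ha
    have h2 : p.2.1 ≤ p.2.1 * b := Nat.le_mul_of_pos_right _ hb
    have h3 : p.2.2 ≤ p.2.2 * c := Nat.le_mul_of_pos_right _ hc
    exact ⟨⟨by omega, by omega, by omega⟩, h⟩
  · exact fun h => h.2

lemma tripleSum (a b c x : ℕ) (ha : 0 < a) (hb : 0 < b) (hc : 0 < c) :
    (((range (x+1)) ×ˢ (range (x+1)) ×ˢ (range (x+1))).filter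
        (fun p : ℕ × ℕ × ℕ => p.1 * a + p.2.1 * b + p.2.2 * c = x)).card
    = ∑ k ∈ range (x / c + 1),
        (((range (x - k*c + 1)) ×ˢ (range (x - k*c + 1))).filter
          (fun p : ℕ × ℕ => p.1 * a + p.2 * b = x - k*c)).card := by
  rw [Finset.card_eq_sum_card_fiberwise
    (f := fun p : ℕ × ℕ × ℕ => p.2.2) (t := range (x / c + 1))]
  · apply Finset.sum_congr rfl
    intro k hk
    simp only [mem_range] at hk
    have hkc : k * c ≤ x := by
      have : k ≤ x / c := by omega
      calc k * c ≤ x / c * c := Nat.mul_le_mul_right c this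
        _ ≤ x := Nat.div_mul_le_self x c
    apply Finset.card_bij (fun p _ => (p.1, p.2.1))
    · rintro p hp
      simp only [mem_filter, mem_product, mem_range] at hp ⊢
      obtain ⟨⟨⟨q1, q2, q3⟩, hsum⟩, hk2⟩ := hp
      have hcc : p.2.2 * c = k * c := by rw [hk2]
      have h1 : p.1 ≤ p.1 * a := Nat.le_mul_of_pos_right _ ha
      have h2 : p.2.1 ≤ p.2.1 * b := Nat.le_mul_of_pos_right _ hb
      exact ⟨⟨by omega, by omega⟩, by omega⟩
    · rintro p hp p' hp' h
      simp only [mem_filter, mem_product, mem_range] at hp hp'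
      simp only [Prod.mk.injEq] at h
      obtain ⟨e1, e2⟩ := h
      have e3 : p.2.2 = p'.2.2 := hp.2.trans hp'.2.symm
      exact Prod.ext e1 (Prod.ext e2 e3)
    · rintro q hq
      simp only [mem_filter, mem_product, mem_range] at hq
      obtain ⟨⟨g1, g2⟩, g3⟩ := hq
      refine ⟨(q.1, q.2, k), ?_, rfl⟩
      simp only [mem_filter, mem_product, mem_range]
      have hkx : k ≤ x := by
        calc k ≤ k * c := Nat.le_mul_of_pos_right _ hc
          _ ≤ x := hkc
      exact ⟨⟨⟨by omega, by omega, by omega⟩, by omega⟩, trivial⟩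
  · intro p hp
    simp only [coe_filter, Set.mem_setOf_eq, mem_coe, mem_filter, mem_product, mem_range] at hp
    simp only [coe_range, Set.mem_Iio, mem_coe, mem_range]
    have : p.2.2 ≤ x / c := by
      rw [Nat.le_div_iff_mul_le hc]; omega
    omega

section Aux
variable (a b c : ℕ)

lemma realPairBound (ha : 0 < a) (hb : 0 < b) (hab : Nat.Coprime a b) (m : ℕ)
    (hP : m / (a*b) ≤ (((range (m+1)) ×ˢ (range (m+1))).filter
        (fun p : ℕ × ℕ => p.1 * a + p.2 * b = m)).card ∧
      (((range (m+1)) ×ˢ (range (m+1))).filter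
        (fun p : ℕ × ℕ => p.1 * a + p.2 * b = m)).card ≤ m / (a*b) + 1) :
    |((((range (m+1)) ×ˢ (range (m+1))).filter
        (fun p : ℕ × ℕ => p.1 * a + p.2 * b = m)).card : ℝ) - (m : ℝ)/(a*b)| ≤ 1 := by
  obtain ⟨h1, h2⟩ := hP
  have hab0 : (0:ℝ) < (a:ℝ)*(b:ℝ) := by positivity
  have hF1 : ((m/(a*b) : ℕ) : ℝ) ≤ (m:ℝ)/((a:ℝ)*(b:ℝ)) := by
    rw [le_div_iff₀ hab0]
    have : (m/(a*b)) * (a*b) ≤ m := Nat.div_mul_le_self m (a*b)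
    calc ((m/(a*b) : ℕ) : ℝ) * ((a:ℝ)*(b:ℝ)) = (((m/(a*b)) * (a*b) : ℕ) : ℝ) := by push_cast; ring
      _ ≤ (m : ℝ) := by exact_mod_cast this
  have hF2 : (m:ℝ)/((a:ℝ)*(b:ℝ)) < ((m/(a*b) : ℕ) : ℝ) + 1 := by
    rw [div_lt_iff₀ hab0]
    have hlt : m < (m/(a*b) + 1) * (a*b) := by
      have e1 := Nat.div_add_mod m (a*b)
      have e2 : m % (a*b) < a*b := Nat.mod_lt m (by positivity)
      have e3 : (m/(a*b) + 1) * (a*b) = (a*b) * (m/(a*b)) + a*b := by ring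
      omega
    calc (m : ℝ) < (((m/(a*b) + 1) * (a*b) : ℕ) : ℝ) := by exact_mod_cast hlt
      _ = (((m/(a*b) : ℕ) : ℝ) + 1) * ((a:ℝ)*(b:ℝ)) := by push_cast; ring
  have hc1 : ((m/(a*b) : ℕ) : ℝ) ≤ ((((range (m+1)) ×ˢ (range (m+1))).filter
        (fun p : ℕ × ℕ => p.1 * a + p.2 * b = m)).card : ℝ) := by exact_mod_cast h1
  have hc2 : ((((range (m+1)) ×ˢ (range (m+1))).filter
        (fun p : ℕ × ℕ => p.1 * a + p.2 * b = m)).card : ℝ) ≤ ((m/(a*b) : ℕ) : ℝ) + 1 := by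
    exact_mod_cast h2
  rw [abs_le]
  constructor <;> linarith
end Aux

set_option maxHeartbeats 1000000 in
theorem denumerant_three_gens_main_term (a b c : ℕ) (ha : 0 < a) (hb : 0 < b) (hc : 0 < c)
    (hab : Nat.Coprime a b) (hac : Nat.Coprime a c) (hbc : Nat.Coprime b c)
    (T : ℕ → ℕ)
    (hT : ∀ x, T x = {p : ℕ × ℕ × ℕ | p.1 * a + p.2.1 * b + p.2.2 * c = x}.ncard) :
    ∃ K L : ℝ, ∀ x : ℕ,
      |(T x : ℝ) - (a * b * c : ℝ) / 2 * (x / (a * b * c) : ℕ) ^ 2| ≤ K * x + L := by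
  refine ⟨3, 2*c + 1, fun x => ?_⟩
  set q : ℕ := x / c with hq_def
  set q' : ℕ := x / (a*b*c) with hq'_def
  have hTx : (T x : ℝ) = ∑ k ∈ range (q + 1),
      (((((range (x - k*c + 1)) ×ˢ (range (x - k*c + 1))).filter
          (fun p : ℕ × ℕ => p.1 * a + p.2 * b = x - k*c)).card : ℕ) : ℝ) := by
    rw [hT x, tripleSet a b c x ha hb hc, tripleSum a b c x ha hb hc]
    push_cast
    rfl
  set X : ℝ := (x : ℝ) with hX_def
  set C : ℝ := (c : ℝ) with hC_def
  have hX0 : 0 ≤ X := Nat.cast_nonneg x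
  have hC1 : 1 ≤ C := by rw [hC_def]; exact_mod_cast hc
  have hab0 : (1:ℝ) ≤ (a:ℝ)*(b:ℝ) := by
    have : 1 ≤ a * b := Nat.one_le_iff_ne_zero.2 (by positivity)
    exact_mod_cast this
  -- Step B : |T x - Σ m_k/(ab)| ≤ q+1
  have habs1 : |(T x : ℝ) - ∑ k ∈ range (q+1), ((x - k*c : ℕ) : ℝ)/((a:ℝ)*(b:ℝ))|
      ≤ (q : ℝ) + 1 := by
    rw [hTx, ← Finset.sum_sub_distrib]
    refine le_trans (Finset.abs_sum_le_sum_abs _ _) ?_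
    have : ∀ k ∈ range (q+1), |((((((range (x - k*c + 1)) ×ˢ (range (x - k*c + 1))).filter
          (fun p : ℕ × ℕ => p.1 * a + p.2 * b = x - k*c)).card : ℕ) : ℝ)
            - ((x - k*c : ℕ) : ℝ)/((a:ℝ)*(b:ℝ)))| ≤ 1 := fun k _ =>
      realPairBound a b ha hb hab (x - k*c) (pairBound a b ha hb hab (x - k*c))
    refine le_trans (Finset.sum_le_sum this) ?_
    simp
  -- Step C : sum of m_k
  have hsum : ∑ k ∈ range (q+1), ((x - k*c : ℕ) : ℝ)
      = ((q:ℝ)+1)*X - C*((q:ℝ)*((q:ℝ)+1))/2 := by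
    have hterm : ∀ k ∈ range (q+1), ((x - k*c : ℕ) : ℝ) = X - (k:ℝ)*C := by
      intro k hk
      simp only [mem_range] at hk
      have hkc : k * c ≤ x := by
        have hkq : k ≤ q := by omega
        calc k * c ≤ q * c := Nat.mul_le_mul_right c hkq
          _ ≤ x := by rw [hq_def]; exact Nat.div_mul_le_self x c
      rw [Nat.cast_sub hkc]
      push_cast
      ring
    rw [Finset.sum_congr rfl hterm, Finset.sum_sub_distrib, Finset.sum_const,
      Finset.card_range]
    have hgauss : (∑ k ∈ range (q+1), ((k:ℝ)*C)) = (q:ℝ)*((q:ℝ)+1)/2 * C := by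
      rw [← Finset.sum_mul]
      congr 1
      have h2 : (∑ k ∈ range (q+1), k) * 2 = (q+1) * q := by
        rw [Finset.sum_range_id_mul_two]; simp
      have h3 : ((∑ k ∈ range (q+1), k : ℕ) : ℝ) * 2 = ((q:ℝ)+1) * (q:ℝ) := by
        exact_mod_cast congrArg (Nat.cast : ℕ → ℝ) h2
      push_cast at h3 ⊢
      linarith
    rw [hgauss]
    push_cast
    ring
  -- Step D
  have hC0 : (0:ℝ) < C := by linarith
  have hD : |(((q:ℝ)+1)*X - C*((q:ℝ)*((q:ℝ)+1))/2) - X^2/(2*C)| ≤ X + 2*C := by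
    set Q : ℝ := (q : ℝ) with hQ_def
    set R : ℝ := ((x % c : ℕ) : ℝ) with hR_def
    have hQ0 : 0 ≤ Q := Nat.cast_nonneg q
    have hR0 : 0 ≤ R := Nat.cast_nonneg _
    have hRC : R < C := by
      rw [hR_def, hC_def]; exact_mod_cast Nat.mod_lt x hc
    have hx : X = C*Q + R := by
      rw [hX_def, hC_def, hQ_def, hR_def, hq_def]
      exact_mod_cast (Nat.div_add_mod x c).symm
    have key : ((Q+1)*X - C*(Q*(Q+1))/2) - X^2/(2*C) = Q*C/2 + R - R^2/(2*C) := by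
      rw [hx]; field_simp; ring
    have hR2a : 0 ≤ R^2/(2*C) := by positivity
    have hR2b : R^2/(2*C) ≤ C/2 := by
      rw [div_le_iff₀ (by linarith : (0:ℝ) < 2*C)]
      nlinarith
    have hQC : Q*C ≤ X := by rw [hx, mul_comm]; linarith
    rw [key, abs_le]
    constructor <;> linarith
  -- Step D' : divide by ab
  have habN : (0:ℝ) < (a:ℝ)*(b:ℝ) := by linarith
  have habs2 : |(∑ k ∈ range (q+1), ((x - k*c : ℕ) : ℝ)/((a:ℝ)*(b:ℝ)))
      - X^2/(2*((a:ℝ)*(b:ℝ)*C))| ≤ X + 2*C := by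
    have e2 : X^2/(2*((a:ℝ)*(b:ℝ)*C)) = (X^2/(2*C))/((a:ℝ)*(b:ℝ)) := by
      rw [div_div]; congr 1; ring
    rw [← Finset.sum_div, e2, hsum, div_sub_div_same, abs_div, abs_of_pos habN]
    refine le_trans ?_ hD
    calc |(((q:ℝ)+1)*X - C*((q:ℝ)*((q:ℝ)+1))/2 - X^2/(2*C))| / ((a:ℝ)*(b:ℝ))
        ≤ |(((q:ℝ)+1)*X - C*((q:ℝ)*((q:ℝ)+1))/2 - X^2/(2*C))| :=
          div_le_self (abs_nonneg _) hab0
      _ = _ := rfl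
  -- Step E
  set NR : ℝ := (a:ℝ)*(b:ℝ)*C with hNR_def
  have hNR1 : (1:ℝ) ≤ NR := by
    have : (1:ℝ)*1 ≤ ((a:ℝ)*(b:ℝ))*C := mul_le_mul hab0 hC1 zero_le_one (by linarith)
    simpa using this
  have hNR0 : (0:ℝ) < NR := by linarith
  set Q' : ℝ := (q' : ℝ) with hQ'_def
  have hE : |X^2/(2*NR) - NR/2*Q'^2| ≤ X := by
    set R' : ℝ := ((x % (a*b*c) : ℕ) : ℝ) with hR'_def
    have hR'0 : 0 ≤ R' := Nat.cast_nonneg _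
    have hR'N : R' < NR := by
      rw [hR'_def, hNR_def, hC_def]
      have : x % (a*b*c) < a*b*c := Nat.mod_lt x (by positivity)
      exact_mod_cast this
    have hQ'0 : 0 ≤ Q' := Nat.cast_nonneg q'
    have hx' : X = NR*Q' + R' := by
      rw [hX_def, hNR_def, hC_def, hQ'_def, hR'_def, hq'_def]
      exact_mod_cast (Nat.div_add_mod x (a*b*c)).symm
    have key2 : X^2/(2*NR) - NR/2*Q'^2 = (R'*(X + NR*Q'))/(2*NR) := by
      rw [hx']; field_simp; ring
    have hNQ : NR*Q' ≤ X := by rw [hx']; linarith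
    rw [key2, abs_le]
    constructor
    · have h0 : 0 ≤ (R'*(X + NR*Q'))/(2*NR) := by positivity
      linarith
    · rw [div_le_iff₀ (by linarith : (0:ℝ) < 2*NR)]
      nlinarith
  -- combine
  have hq_le : (q : ℝ) ≤ X := by
    rw [hX_def, hq_def]; exact_mod_cast Nat.div_le_self x c
  have goal_eq : ((a:ℕ) * b * c : ℝ) / 2 * ((x / (a * b * c) : ℕ) : ℝ) ^ 2 = NR/2*Q'^2 := by
    rw [hNR_def, hQ'_def, hq'_def, hC_def]
  have tri : |(T x : ℝ) - NR/2*Q'^2| ≤ ((q:ℝ)+1) + (X + 2*C) + X := by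
    have t1 := abs_sub_le ((T x : ℝ))
      (∑ k ∈ range (q+1), ((x - k*c : ℕ) : ℝ)/((a:ℝ)*(b:ℝ))) (X^2/(2*NR))
    have t2 := abs_sub_le ((T x : ℝ)) (X^2/(2*NR)) (NR/2*Q'^2)
    rw [hNR_def] at *
    linarith [habs1, habs2, hE, t1, t2]
  rw [goal_eq]
  have hC2 : (2*(c:ℕ) + 1 : ℝ) = 2*C + 1 := by rw [hC_def]
  calc |(T x : ℝ) - NR/2*Q'^2| ≤ ((q:ℝ)+1) + (X + 2*C) + X := tri
    _ ≤ 3*X + (2*C + 1) := by linarith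
    _ = 3 * (x:ℝ) + (2*(c:ℝ) + 1) := by rw [hX_def, hC_def]
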